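/- Let A = UHF(n^∞) = lim→ A_N with A_N = M_n(ℂ)^{⊗N}, let α be the endomorphism induced by a ↦ e_{11} ⊗ a, and let L(a) = α^{-1}(p a p) where p = i^1(e_{11}) is the image of e_{11} ⊗ 1 ⊗ ⋯. Then L is a transfer operator for (A, α) that is almost faithful on A (if L((ab)*ab) = 0 for all b ∈ A then a = 0) but not faithful (there exists nonzero a with L(a*a) = 0). -/

import Mathlib

open Kronecker

private lemma std_conj {m : Type*} [Fintype m] [DecidableEq m]
    (P : Matrix m m ℂ) (k q r l : m) :
    Matrix.single k q 1 * P * Matrix.single r l 1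
      = (P q r) • Matrix.single k l 1 := by
  ext x y
  by_cases hx : x = k
  · subst hx
    by_cases hy : y = l
    · subst hy
      rw [Matrix.mul_single_apply_same, Matrix.single_mul_apply_same]
      simp
    · rw [Matrix.mul_single_apply_of_ne _ _ _ _ _ hy]
      have h2 : l ≠ y := fun h1 => hy h1.symm
      simp [h2]
  · rw [Matrix.mul_apply]
    have hz : ∀ z, (Matrix.single k q (1:ℂ) * P) x z = 0 := fun z =>
      Matrix.single_mul_apply_of_ne _ _ _ _ _ hx _
    have h2 : k ≠ x := fun h1 => hx h1.symm
    simp [hz, h2]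

private lemma span_annihilate {m : Type*} [Fintype m] [DecidableEq m]
    {A : Type*} [AddCommMonoid A] [Module ℂ A]
    (P : Matrix m m ℂ) (hP : P ≠ 0) (f : Matrix m m ℂ →ₗ[ℂ] A)
    (hf : ∀ u v : Matrix m m ℂ, f (u * P * v) = 0) (x : Matrix m m ℂ) : f x = 0 := by
  obtain ⟨q, r, hqr⟩ : ∃ q r, P q r ≠ 0 := by
    by_contra h
    push_neg at h
    exact hP (by ext a b; simpa using h a b)
  have hstd : ∀ (k l : m) (c : ℂ), f (Matrix.single k l c) = 0 := by
    intro k l c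
    have h1 : Matrix.single k l c
        = (c * (P q r)⁻¹) • (Matrix.single k q 1 * P * Matrix.single r l 1) := by
      rw [std_conj, smul_smul, mul_assoc, inv_mul_cancel₀ hqr, mul_one,
        Matrix.smul_single, smul_eq_mul, mul_one]
    rw [h1, map_smul, hf, smul_zero]
  conv_lhs => rw [Matrix.matrix_eq_sum_single x]
  simp [map_sum, hstd]

theorem uhf_transfer_operator_almost_faithful_not_faithful
    {A : Type*} [CStarAlgebra A] [PartialOrder A] [StarOrderedRing A]
    (n : ℕ) (hn : 2 ≤ n)
    (i : ∀ N : ℕ, Matrix (Fin (n ^ N)) (Fin (n ^ N)) ℂ →⋆ₐ[ℂ] A)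
    (hi_inj : ∀ N, Function.Injective (i N))
    (hi_compat : ∀ (N : ℕ) (a : Matrix (Fin (n ^ N)) (Fin (n ^ N)) ℂ),
      i N a = i (N + 1) (Matrix.reindex
        (finProdFinEquiv.trans (finCongr (pow_succ n N).symm))
        (finProdFinEquiv.trans (finCongr (pow_succ n N).symm))
        (a ⊗ₖ (1 : Matrix (Fin n) (Fin n) ℂ))))
    (hi_dense : Dense (⋃ N : ℕ, Set.range (i N)))
    (α : A →⋆ₙₐ[ℂ] A) (hα_inj : Function.Injective α)
    (hα : ∀ (N : ℕ) (a : Matrix (Fin (n ^ N)) (Fin (n ^ N)) ℂ),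
      α (i N a) = i (N + 1) (Matrix.reindex
        (finProdFinEquiv.trans (finCongr (pow_succ' n N).symm))
        (finProdFinEquiv.trans (finCongr (pow_succ' n N).symm))
        ((Matrix.single (⟨0, by omega⟩ : Fin n) (⟨0, by omega⟩ : Fin n) (1 : ℂ)) ⊗ₖ a)))
    (L : A → A)
    (hL : ∀ a : A, α (L a) = α 1 * a * α 1) :
    IsLinearMap ℂ L ∧ Continuous L ∧
      (∀ a : A, 0 ≤ a → 0 ≤ L a) ∧
      (∀ a b : A, L (α a * b) = a * L b) ∧
      (∀ a : A, (∀ b : A, L (star (a * b) * (a * b)) = 0) → a = 0) ∧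
      (∃ a : A, a ≠ 0 ∧ L (star a * a) = 0) := by
  have hp : star (α 1) = α 1 := by rw [← map_star, star_one]
  -- linearity
  have hlin : IsLinearMap ℂ L :=
    ⟨fun x y => hα_inj (by rw [hL, map_add, hL, hL, mul_add, add_mul]),
     fun c x => hα_inj (by rw [map_smul, hL, hL, mul_smul_comm, smul_mul_assoc])⟩
  have hsub : ∀ x y : A, L x - L y = L (x - y) := fun x y =>
    ((IsLinearMap.mk' L hlin).map_sub x y).symm
  -- continuity
  have hnorm : ∀ x : A, ‖α x‖ = ‖x‖ := NonUnitalStarAlgHom.norm_map α hα_inj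
  have hcont : Continuous L := by
    have hlip : LipschitzWith (‖α 1‖₊ * ‖α 1‖₊) L := by
      apply LipschitzWith.of_dist_le_mul
      intro x y
      calc dist (L x) (L y) = ‖L x - L y‖ := dist_eq_norm _ _
        _ = ‖L (x - y)‖ := by rw [hsub]
        _ = ‖α (L (x - y))‖ := (hnorm _).symm
        _ = ‖α 1 * (x - y) * α 1‖ := by rw [hL]
        _ ≤ ‖α 1 * (x - y)‖ * ‖α 1‖ := norm_mul_le _ _
        _ ≤ ‖α 1‖ * ‖x - y‖ * ‖α 1‖ := by gcongr; exact norm_mul_le _ _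
        _ = ↑(‖α 1‖₊ * ‖α 1‖₊) * dist x y := by
            rw [dist_eq_norm]; push_cast [coe_nnnorm]; ring
    exact hlip.continuous
  -- positivity
  have hposmap : ∀ x : A, 0 ≤ x → 0 ≤ α x := by
    intro x hx
    rw [StarOrderedRing.nonneg_iff] at hx ⊢
    induction hx using AddSubmonoid.closure_induction with
    | mem z hz =>
        obtain ⟨s, rfl⟩ := hz
        exact AddSubmonoid.subset_closure ⟨α s, by rw [map_mul, map_star]⟩
    | zero => simpa using AddSubmonoid.zero_mem _
    | add z w _ _ hz hw => simpa [map_add] using AddSubmonoid.add_mem _ hz hw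
  have hpos : ∀ a : A, 0 ≤ a → 0 ≤ L a := by
    intro a ha
    have hsa : IsSelfAdjoint (L a) := by
      apply hα_inj
      rw [map_star, hL, star_mul, star_mul, hp, (IsSelfAdjoint.of_nonneg ha).star_eq,
        mul_assoc]
    have hαpos : 0 ≤ α (L a) := by
      rw [hL]
      have := star_left_conjugate_nonneg ha (α 1)
      rwa [hp] at this
    have h1 : α (L a) = α ((L a)⁺) - α ((L a)⁻) := by
      rw [← map_sub, CFC.posPart_sub_negPart _ hsa]
    have h2 : α ((L a)⁺) * α ((L a)⁻) = 0 := by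
      rw [← map_mul, CFC.posPart_mul_negPart, map_zero]
    have h3 := CFC.posPart_negPart_unique h1 h2
      (hposmap _ (CFC.posPart_nonneg (L a))) (hposmap _ (CFC.negPart_nonneg (L a)))
    have h4 : (α (L a))⁻ = 0 := by
      rw [CFC.negPart_eq_zero_iff _ (hsa.map α)]
      exact hαpos
    have h5 : (L a)⁻ = 0 := hα_inj (by rw [← h3.2, h4, map_zero])
    rw [← CFC.negPart_eq_zero_iff _ hsa]
    exact h5
  -- transfer identity
  have htrans : ∀ a b : A, L (α a * b) = a * L b := by
    intro a b
    apply hα_inj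
    rw [hL, map_mul, hL]
    have h1 : α 1 * α a = α a := by rw [← map_mul, one_mul]
    have h2 : α a * α 1 = α a := by rw [← map_mul, mul_one]
    simp only [← mul_assoc, h1, h2]
  -- nontriviality
  have h10 : (1 : A) ≠ 0 := by
    intro h
    have h1 : (1 : Matrix (Fin (n ^ 1)) (Fin (n ^ 1)) ℂ) = 0 :=
      hi_inj 1 (by rw [map_one, map_zero, h])
    have hlt : 0 < n ^ 1 := pow_pos (by omega) 1
    have := congrFun (congrFun h1 ⟨0, hlt⟩) ⟨0, hlt⟩
    simp [Matrix.one_apply] at this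
  have hpne : α 1 ≠ 0 := fun h => h10 (hα_inj (by rw [h, map_zero]))
  -- p is in every range i (N+1)
  have hpmem : ∀ N : ℕ, ∃ P : Matrix (Fin (n ^ (N + 1))) (Fin (n ^ (N + 1))) ℂ,
      i (N + 1) P = α 1 ∧ P ≠ 0 := by
    intro N
    induction N with
    | zero =>
        have h0 : (i 0) 1 = (1 : A) := map_one (i 0)
        have h1 : α 1 = i (0 + 1) (Matrix.reindex
            (finProdFinEquiv.trans (finCongr (pow_succ' n 0).symm))
            (finProdFinEquiv.trans (finCongr (pow_succ' n 0).symm))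
            ((Matrix.single (⟨0, by omega⟩ : Fin n) (⟨0, by omega⟩ : Fin n) (1 : ℂ)) ⊗ₖ
              (1 : Matrix (Fin (n ^ 0)) (Fin (n ^ 0)) ℂ))) := by
          rw [← h0, hα 0 1]
        refine ⟨_, h1.symm, ?_⟩
        intro h
        apply hpne
        rw [h1, h, map_zero]
    | succ N ih =>
        obtain ⟨P, hP, hPne⟩ := ih
        have h1 : α 1 = i (N + 1 + 1) (Matrix.reindex
            (finProdFinEquiv.trans (finCongr (pow_succ n (N + 1)).symm))
            (finProdFinEquiv.trans (finCongr (pow_succ n (N + 1)).symm))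
            (P ⊗ₖ (1 : Matrix (Fin n) (Fin n) ℂ))) := by
          rw [← hi_compat (N + 1) P, hP]
        refine ⟨_, h1.symm, ?_⟩
        intro h
        apply hpne
        rw [h1, h, map_zero]
  -- almost faithful
  have hfaith : ∀ a : A, (∀ b : A, L (star (a * b) * (a * b)) = 0) → a = 0 := by
    intro a ha
    have habp : ∀ b : A, a * b * α 1 = 0 := by
      intro b
      have h0 : α 1 * (star (a * b) * (a * b)) * α 1 = 0 := by
        rw [← hL, ha b, map_zero]
      have h1 : star (a * b * α 1) * (a * b * α 1) = 0 := by
        rw [star_mul, hp]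
        calc α 1 * star (a * b) * (a * b * α 1)
            = α 1 * (star (a * b) * (a * b)) * α 1 := by simp only [mul_assoc]
          _ = 0 := h0
      exact (CStarRing.star_mul_self_eq_zero_iff _).mp h1
    have hstep : ∀ (N : ℕ) (m : Matrix (Fin (n ^ (N + 1))) (Fin (n ^ (N + 1))) ℂ),
        a * i (N + 1) m = 0 := by
      intro N m
      obtain ⟨P, hP, hPne⟩ := hpmem N
      let f : Matrix (Fin (n ^ (N + 1))) (Fin (n ^ (N + 1))) ℂ →ₗ[ℂ] A :=
        (LinearMap.mulLeft ℂ a).comp (i (N + 1)).toAlgHom.toLinearMap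
      have hf : ∀ u v, f (u * P * v) = 0 := by
        intro u v
        show a * (i (N + 1)) (u * P * v) = 0
        rw [map_mul, map_mul, hP]
        simp only [← mul_assoc]
        rw [habp (i (N + 1) u), zero_mul]
      exact span_annihilate P hPne f hf m
    have hall : ∀ (N : ℕ) (m : Matrix (Fin (n ^ N)) (Fin (n ^ N)) ℂ), a * i N m = 0 := by
      intro N
      cases N with
      | zero => intro m; rw [hi_compat 0 m]; exact hstep 0 _
      | succ N => exact hstep N
    have hS : {x : A | a * x = 0} = Set.univ := by
      apply Set.eq_univ_of_forall
      intro x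
      have hclosed : IsClosed {x : A | a * x = 0} :=
        isClosed_eq (continuous_mul_left a) continuous_const
      have hsub2 : (⋃ N : ℕ, Set.range (i N)) ⊆ {x : A | a * x = 0} := by
        rintro x hx
        simp only [Set.mem_iUnion, Set.mem_range] at hx
        obtain ⟨N, m, rfl⟩ := hx
        exact hall N m
      have := hclosed.closure_subset_iff.mpr hsub2
      rw [hi_dense.closure_eq] at this
      exact this (Set.mem_univ x)
    have h2 : a * star a = 0 := by
      have := hS ▸ Set.mem_univ (star a)
      simpa using (Set.eq_univ_iff_forall.mp hS (star a))
    have h3 : star a = 0 := by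
      rw [← CStarRing.star_mul_self_eq_zero_iff (star a), star_star]
      exact h2
    simpa using congrArg star h3
  -- not faithful
  have hnot : ∃ a : A, a ≠ 0 ∧ L (star a * a) = 0 := by
    set e := (finProdFinEquiv.trans (finCongr (pow_succ' n 0).symm) :
      Fin n × Fin (n ^ 0) ≃ Fin (n ^ 1)) with he
    have hzlt : (0 : ℕ) < n ^ 0 := by norm_num
    have hlt : 0 < n ^ 1 := pow_pos (by omega) 1
    set j : Fin (n ^ 1) := e (⟨1, by omega⟩, ⟨0, hzlt⟩) with hj
    set M : Matrix (Fin (n ^ 1)) (Fin (n ^ 1)) ℂ :=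
      Matrix.single ⟨0, hlt⟩ j 1 with hM
    set P : Matrix (Fin (n ^ 1)) (Fin (n ^ 1)) ℂ :=
      Matrix.reindex e e
        ((Matrix.single (⟨0, by omega⟩ : Fin n) (⟨0, by omega⟩ : Fin n) (1 : ℂ)) ⊗ₖ
          (1 : Matrix (Fin (n ^ 0)) (Fin (n ^ 0)) ℂ)) with hPdef
    have hpP : α 1 = i 1 P := by
      have h1 : (i 0) 1 = (1 : A) := map_one (i 0)
      rw [← h1, hα 0 1]
    have hMP : M * P = 0 := by
      ext x y
      rw [Matrix.mul_apply]
      apply Finset.sum_eq_zero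
      intro k _
      by_cases hk : k = j
      · subst hk
        have : P j y = 0 := by
          rw [hPdef, Matrix.reindex_apply, Matrix.submatrix_apply, hj,
            Equiv.symm_apply_apply, Matrix.kroneckerMap_apply]
          have hne : (⟨0, by omega⟩ : Fin n) ≠ ⟨1, by omega⟩ := by
            simp [Fin.ext_iff]
          rw [Matrix.single_apply_of_row_ne hne, zero_mul]
        rw [this, mul_zero]
      · rw [hM, Matrix.single_apply_of_col_ne _ _ (fun h => hk h.symm), zero_mul]
    refine ⟨i 1 M, ?_, ?_⟩
    · intro h
      have h1 : M = 0 := hi_inj 1 (by rw [h, map_zero])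
      have := congrFun (congrFun h1 ⟨0, hlt⟩) j
      simp [hM] at this
    · have hap : i 1 M * α 1 = 0 := by rw [hpP, ← map_mul, hMP, map_zero]
      apply hα_inj
      rw [hL, map_zero]
      calc α 1 * (star (i 1 M) * i 1 M) * α 1
          = (α 1 * star (i 1 M)) * (i 1 M * α 1) := by simp only [mul_assoc]
        _ = (α 1 * star (i 1 M)) * 0 := by rw [hap]
        _ = 0 := mul_zero _
  exact ⟨hlin, hcont, hpos, htrans, hfaith, hnot⟩
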